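/- The function v₁₀(R) = R⁴/(4(1+R²)²) solves the inhomogeneous linearized equation with source R Φ'(R) + Φ(R): for all R > 0, v₁₀''(R) + v₁₀'(R)/R + (2/R²)(1 − 3Q(R)²) v₁₀(R) = R Φ'(R) + Φ(R). In particular, the solution remains bounded as R → ∞. -/

import Mathlib

/- STATEMENT 8: v₁₀(R) = R⁴/(4(1+R²)²) solves the inhomogeneous linearized
equation L v₁₀ = R Φ'(R) + Φ(R), where
L f = f'' + f'/R + (2/R²)(1 − 3Q²) f, Q(R) = (1−R²)/(1+R²),
Φ(R) = R²/(1+R²)²; and v₁₀ remains bounded. -/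

/-- The instanton `Q(R) = (1-R²)/(1+R²)`. -/
noncomputable def Qinst (R : ℝ) : ℝ := (1 - R ^ 2) / (1 + R ^ 2)

/-- The zero mode `Φ(R) = R²/(1+R²)²`. -/
noncomputable def PhiYM (R : ℝ) : ℝ := R ^ 2 / (1 + R ^ 2) ^ 2

/-- The first correction `v₁₀(R) = R⁴/(4(1+R²)²)`. -/
noncomputable def v10 (R : ℝ) : ℝ := R ^ 4 / (4 * (1 + R ^ 2) ^ 2)

lemma one_add_sq_pos (R : ℝ) : (0:ℝ) < 1 + R ^ 2 := by positivity

lemma hv10' (R : ℝ) : HasDerivAt v10 (R ^ 3 / (1 + R ^ 2) ^ 3) R := by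
  have h : (1 + R ^ 2) ≠ 0 := (one_add_sq_pos R).ne'
  have h4 : (4 * (1 + R ^ 2) ^ 2) ≠ 0 := by positivity
  have hnum : HasDerivAt (fun R : ℝ => R ^ 4) (4 * R ^ 3) R := by
    simpa using hasDerivAt_pow 4 R
  have hden : HasDerivAt (fun R : ℝ => 4 * (1 + R ^ 2) ^ 2) (4 * (2 * (1 + R ^ 2) * (2 * R))) R := by
    have : HasDerivAt (fun R : ℝ => 1 + R ^ 2) (2 * R) R := by
      simpa using (hasDerivAt_pow 2 R).const_add 1
    simpa using ((this.pow 2).const_mul 4)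
  have := hnum.div hden h4
  refine this.congr_deriv ?_
  field_simp
  ring

lemma deriv_v10 : deriv v10 = fun R => R ^ 3 / (1 + R ^ 2) ^ 3 := by
  funext R; exact (hv10' R).deriv

lemma hv10'' (R : ℝ) :
    HasDerivAt (fun R : ℝ => R ^ 3 / (1 + R ^ 2) ^ 3)
      (3 * R ^ 2 * (1 - R ^ 2) / (1 + R ^ 2) ^ 4) R := by
  have h : (1 + R ^ 2) ≠ 0 := (one_add_sq_pos R).ne'
  have h3 : ((1 + R ^ 2) ^ 3) ≠ 0 := by positivity
  have hnum : HasDerivAt (fun R : ℝ => R ^ 3) (3 * R ^ 2) R := by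
    simpa using hasDerivAt_pow 3 R
  have hden : HasDerivAt (fun R : ℝ => (1 + R ^ 2) ^ 3) (3 * (1 + R ^ 2) ^ 2 * (2 * R)) R := by
    have : HasDerivAt (fun R : ℝ => 1 + R ^ 2) (2 * R) R := by
      simpa using (hasDerivAt_pow 2 R).const_add 1
    exact this.pow 3
  have := hnum.div hden h3
  refine this.congr_deriv ?_
  field_simp
  ring

lemma hPhi' (R : ℝ) : HasDerivAt PhiYM (2 * R * (1 - R ^ 2) / (1 + R ^ 2) ^ 3) R := by
  have h2 : ((1 + R ^ 2) ^ 2) ≠ 0 := by positivity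
  have hnum : HasDerivAt (fun R : ℝ => R ^ 2) (2 * R) R := by
    simpa using hasDerivAt_pow 2 R
  have hden : HasDerivAt (fun R : ℝ => (1 + R ^ 2) ^ 2) (2 * (1 + R ^ 2) * (2 * R)) R := by
    have : HasDerivAt (fun R : ℝ => 1 + R ^ 2) (2 * R) R := by
      simpa using (hasDerivAt_pow 2 R).const_add 1
    exact (this.pow 2).congr_deriv (by norm_num)
  have := hnum.div hden h2
  refine this.congr_deriv ?_
  field_simp
  ring

theorem v10_solves_inhomogeneous :
    (∀ R : ℝ, 0 < R →
      deriv (deriv v10) R + deriv v10 R / R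
        + (2 / R ^ 2) * (1 - 3 * (Qinst R) ^ 2) * v10 R
      = R * deriv PhiYM R + PhiYM R) ∧
    ∃ M : ℝ, ∀ R : ℝ, 0 < R → |v10 R| ≤ M := by
  constructor
  · intro R hR
    have h : (1 + R ^ 2) ≠ 0 := (one_add_sq_pos R).ne'
    have hRne : R ≠ 0 := hR.ne'
    rw [deriv_v10, (hv10'' R).deriv, (hPhi' R).deriv]
    simp only [Qinst, PhiYM, v10]
    field_simp
    ring
  · refine ⟨1/4, fun R hR => ?_⟩
    have h : (0:ℝ) < 1 + R ^ 2 := one_add_sq_pos R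
    rw [abs_of_nonneg (by simp only [v10]; positivity : (0:ℝ) ≤ v10 R)]
    rw [v10, div_le_div_iff₀ (by positivity) (by norm_num)]
    nlinarith [sq_nonneg R, sq_nonneg (R^2), sq_nonneg (1 + R^2)]
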